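/- Let a < b be real numbers and p > 1 a real number. If f : ℝ → ℝ is continuous on [a,b], differentiable on [a,b], with f(a) ≥ 0 and f'(x) ≥ p for all x ∈ [a,b], then ∫_a^b f(x)^{p+2} dx ≥ (1/(b−a)^{p−1}) · (∫_a^b f(x) dx)^{p+1}. -/

import Mathlib

private lemma akk_integral_id' {a b : ℝ} : ∫ x in a..b, x = (b ^ 2 - a ^ 2) / 2 :=
  integral_id

private lemma akk_integral_const' {a b c : ℝ} : ∫ _x in a..b, c = (b - a) * c := by
  rw [intervalIntegral.integral_const, smul_eq_mul]

open Real

lemma akkouchi_core_scalar {p t v : ℝ} (hp : 1 ≤ p) (ht : 0 < t)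
    (hc : 0 ≤ v - p * t / 2) :
    (p + 1) * t * (v - p * t / 2) ^ p ≤ v ^ (p + 1) := by
  have hp0 : (0:ℝ) < p := lt_of_lt_of_le one_pos hp
  have hp1 : (0:ℝ) < p + 1 := by linarith
  have hv : (0:ℝ) < v := by nlinarith
  set c := v - p * t / 2 with hcdef
  have hx1 : (0:ℝ) ≤ p ^ 2 / 2 * t := by positivity
  have key := Real.geom_mean_le_arith_mean2_weighted
    (show (0:ℝ) ≤ 1 / (p + 1) by positivity)
    (show (0:ℝ) ≤ p / (p + 1) by positivity) hx1 hc
    (by field_simp; ring)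
  have hAM : 1 / (p + 1) * (p ^ 2 / 2 * t) + p / (p + 1) * c = p * v / (p + 1) := by
    rw [hcdef]; field_simp; ring
  rw [hAM] at key
  -- raise to the power (p+1)
  have hgm0 : (0:ℝ) ≤ (p ^ 2 / 2 * t) ^ (1 / (p + 1)) * c ^ (p / (p + 1)) :=
    mul_nonneg (Real.rpow_nonneg hx1 _) (Real.rpow_nonneg hc _)
  have key2 : ((p ^ 2 / 2 * t) ^ (1 / (p + 1)) * c ^ (p / (p + 1))) ^ (p + 1)
      ≤ (p * v / (p + 1)) ^ (p + 1) :=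
    Real.rpow_le_rpow hgm0 key (le_of_lt hp1)
  have hL : ((p ^ 2 / 2 * t) ^ (1 / (p + 1)) * c ^ (p / (p + 1))) ^ (p + 1)
      = (p ^ 2 / 2 * t) * c ^ p := by
    rw [Real.mul_rpow (Real.rpow_nonneg hx1 _) (Real.rpow_nonneg hc _),
      ← Real.rpow_mul hx1, ← Real.rpow_mul hc, one_div,
      inv_mul_cancel₀ (ne_of_gt hp1), div_mul_cancel₀ _ (ne_of_gt hp1), Real.rpow_one]
  have hR : (p * v / (p + 1)) ^ (p + 1)
      = p ^ (p + 1) * v ^ (p + 1) / (p + 1) ^ (p + 1) := by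
    rw [Real.div_rpow (by positivity) (le_of_lt hp1), Real.mul_rpow hp0.le hv.le]
  rw [hL, hR] at key2
  -- rewrite the rpow identities
  have hpp : p ^ (p + 1) = p ^ p * p := Real.rpow_add_one hp0.ne' p
  have hqq : (p + 1) ^ (p + 1) = (p + 1) ^ p * (p + 1) := Real.rpow_add_one hp1.ne' p
  -- Bernoulli: 2 * p^p ≤ (p+1)^p
  have hB : 2 * p ^ p ≤ (p + 1) ^ p := by
    have hber := one_add_mul_self_le_rpow_one_add
      (show (-1:ℝ) ≤ 1 / p by have := one_div_nonneg.mpr hp0.le; linarith) hp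
    have h1 : (1:ℝ) + p * (1 / p) = 2 := by field_simp; ring
    have h2 : ((1 + 1 / p)) ^ p * p ^ p = (p + 1) ^ p := by
      rw [← Real.mul_rpow (by positivity) hp0.le]
      congr 1
      field_simp
    rw [h1] at hber
    calc 2 * p ^ p ≤ (1 + 1 / p) ^ p * p ^ p :=
          mul_le_mul_of_nonneg_right hber (Real.rpow_nonneg hp0.le p)
      _ = (p + 1) ^ p := h2
  -- put it together
  set A := t * c ^ p with hA
  set V := v ^ (p + 1) with hV
  set P := p ^ p with hP
  set Q := (p + 1) ^ p with hQ
  have hA0 : 0 ≤ A := mul_nonneg ht.le (Real.rpow_nonneg hc _)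
  have hV0 : 0 ≤ V := Real.rpow_nonneg hv.le _
  have hQ0 : (0:ℝ) < Q := Real.rpow_pos_of_pos hp1 _
  have hP0 : (0:ℝ) < P := Real.rpow_pos_of_pos hp0 _
  -- key2 : p^2/2 * t * c^p ≤ P*p*V/(Q*(p+1))
  have key3 : p ^ 2 / 2 * A * (Q * (p + 1)) ≤ P * p * V := by
    have := key2
    rw [hpp, hqq] at this
    have h' : p ^ 2 / 2 * A ≤ P * p * V / (Q * (p + 1)) := by
      calc p ^ 2 / 2 * A = p ^ 2 / 2 * t * c ^ p := by rw [hA]; ring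
        _ ≤ P * p * V / (Q * (p + 1)) := this
    calc p ^ 2 / 2 * A * (Q * (p + 1)) ≤ (P * p * V / (Q * (p + 1))) * (Q * (p + 1)) :=
          mul_le_mul_of_nonneg_right h' (by positivity)
      _ = P * p * V := by field_simp
  have key4 : p ^ 2 / 2 * A * (Q * (p + 1)) ≤ Q / 2 * p * V := by
    calc p ^ 2 / 2 * A * (Q * (p + 1)) ≤ P * p * V := key3
      _ ≤ Q / 2 * p * V := by
          have h5 : 2 * P * (p * V) ≤ Q * (p * V) :=
            mul_le_mul_of_nonneg_right hB (mul_nonneg hp0.le hV0)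
          nlinarith
  have key5 : p ^ 2 * A * (p + 1) ≤ p * V := by
    have h2 : (p ^ 2 / 2 * A * (p + 1)) * Q ≤ (p / 2 * V) * Q := by
      calc (p ^ 2 / 2 * A * (p + 1)) * Q = p ^ 2 / 2 * A * (Q * (p + 1)) := by ring
        _ ≤ Q / 2 * p * V := key4
        _ = (p / 2 * V) * Q := by ring
    have := le_of_mul_le_mul_right h2 hQ0
    nlinarith
  -- conclude
  have h7 : p * ((p + 1) * A) ≤ V := by
    have h8 : p * (p * ((p + 1) * A)) ≤ p * V := by
      calc p * (p * ((p + 1) * A)) = p ^ 2 * A * (p + 1) := by ring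
        _ ≤ p * V := key5
    exact le_of_mul_le_mul_left h8 hp0
  have : (p + 1) * A ≤ V := by
    have h9 : (p + 1) * A ≤ p * ((p + 1) * A) :=
      le_mul_of_one_le_left (mul_nonneg hp1.le hA0) hp
    linarith
  calc (p + 1) * t * c ^ p = (p + 1) * A := by rw [hA]; ring
    _ ≤ V := this

open Real Set intervalIntegral MeasureTheory

theorem akkouchi_qi_inequality
    (a b p : ℝ) (hab : a < b) (hp : 1 < p)
    (f f' : ℝ → ℝ)
    (hcont : ContinuousOn f (Set.Icc a b))
    (hderiv : ∀ x ∈ Set.Icc a b, HasDerivAt f (f' x) x)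
    (hfa : 0 ≤ f a)
    (hf' : ∀ x ∈ Set.Icc a b, p ≤ f' x) :
    (∫ x in a..b, f x ^ (p + 2)) ≥
      (1 / (b - a) ^ (p - 1)) * (∫ x in a..b, f x) ^ (p + 1) := by
  have hab' : a ≤ b := hab.le
  have hp0 : (0:ℝ) < p := by linarith
  set g : ℝ → ℝ := fun u => f u - p * u with hg
  have hgderiv : ∀ u ∈ Icc a b, HasDerivAt g (f' u - p) u := by
    intro u hu
    have h := (hderiv u hu).sub ((hasDerivAt_id u).const_mul p)
    simp only [id, mul_one] at h
    exact h
  have hgcont : ContinuousOn g (Icc a b) :=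
    hcont.sub ((continuous_const.mul continuous_id').continuousOn)
  have hgmono : MonotoneOn g (Icc a b) := by
    apply monotoneOn_of_deriv_nonneg (convex_Icc a b) hgcont
    · intro u hu
      rw [interior_Icc] at hu
      exact (hgderiv u (Ioo_subset_Icc_self hu)).differentiableAt.differentiableWithinAt
    · intro u hu
      rw [interior_Icc] at hu
      rw [(hgderiv u (Ioo_subset_Icc_self hu)).deriv]
      have := hf' u (Ioo_subset_Icc_self hu)
      linarith
  have hflb : ∀ u ∈ Icc a b, p * (u - a) ≤ f u := by
    intro u hu
    have h := hgmono (left_mem_Icc.mpr hab') hu hu.1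
    simp only [hg] at h
    linarith
  have hfnn : ∀ u ∈ Icc a b, 0 ≤ f u := by
    intro u hu
    have h1 := hflb u hu
    nlinarith [hu.1]
  have hfi : ∀ x ∈ Icc a b, IntervalIntegrable f volume a x := fun x hx =>
    (hcont.mono (Icc_subset_Icc le_rfl hx.2)).intervalIntegrable_of_Icc hx.1
  have hcont2 : ContinuousOn (fun u => f u ^ (p + 2)) (Icc a b) :=
    hcont.rpow_const (fun u _ => Or.inr (by linarith))
  have hfi2 : ∀ x ∈ Icc a b, IntervalIntegrable (fun u => f u ^ (p + 2)) volume a x :=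
    fun x hx => (hcont2.mono (Icc_subset_Icc le_rfl hx.2)).intervalIntegrable_of_Icc hx.1
  set F : ℝ → ℝ := fun x => ∫ t in a..x, f t with hF
  set K : ℝ → ℝ := fun x => ∫ t in a..x, f t ^ (p + 2) with hK
  have hbmem : b ∈ Icc a b := right_mem_Icc.mpr hab'
  have hFc : ContinuousOn F (Icc a b) := by
    have h1 : IntegrableOn f (uIcc a b) volume := by
      rw [uIcc_of_le hab']; exact hcont.integrableOn_Icc
    have := intervalIntegral.continuousOn_primitive_interval (μ := volume) h1
    rwa [uIcc_of_le hab'] at this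
  have hKc : ContinuousOn K (Icc a b) := by
    have h1 : IntegrableOn (fun u => f u ^ (p + 2)) (uIcc a b) volume := by
      rw [uIcc_of_le hab']; exact hcont2.integrableOn_Icc
    have := intervalIntegral.continuousOn_primitive_interval (μ := volume) h1
    rwa [uIcc_of_le hab'] at this
  have hcontAt : ∀ u ∈ Ioo a b, ContinuousAt f u := fun u hu =>
    (hderiv u (Ioo_subset_Icc_self hu)).continuousAt
  have hcontAt2 : ∀ u ∈ Ioo a b, ContinuousAt (fun w => f w ^ (p + 2)) u := fun u hu =>
    (hcontAt u hu).rpow_const (Or.inr (by linarith))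
  have hFd : ∀ x ∈ Ioo a b, HasDerivAt F (f x) x := fun x hx =>
    intervalIntegral.integral_hasDerivAt_right (hfi x (Ioo_subset_Icc_self hx))
      (ContinuousAt.stronglyMeasurableAtFilter isOpen_Ioo hcontAt x hx) (hcontAt x hx)
  have hKd : ∀ x ∈ Ioo a b, HasDerivAt K (f x ^ (p + 2)) x := fun x hx =>
    intervalIntegral.integral_hasDerivAt_right (hfi2 x (Ioo_subset_Icc_self hx))
      (ContinuousAt.stronglyMeasurableAtFilter isOpen_Ioo hcontAt2 x hx) (hcontAt2 x hx)
  have hF0 : ∀ x ∈ Icc a b, 0 ≤ F x := fun x hx =>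
    intervalIntegral.integral_nonneg hx.1 (fun u hu => hfnn u ⟨hu.1, hu.2.trans hx.2⟩)
  have hK0 : ∀ x ∈ Icc a b, 0 ≤ K x := fun x hx =>
    intervalIntegral.integral_nonneg hx.1
      (fun u hu => Real.rpow_nonneg (hfnn u ⟨hu.1, hu.2.trans hx.2⟩) _)
  have hFub : ∀ x ∈ Icc a b, F x ≤ f x * (x - a) - p * (x - a) ^ 2 / 2 := by
    intro x hx
    have hint : IntervalIntegrable (fun u => f x - p * x + p * u) volume a x :=
      (continuous_const.add (continuous_const.mul continuous_id')).intervalIntegrable a x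
    have hmono : ∀ u ∈ Icc a x, f u ≤ f x - p * x + p * u := by
      intro u hu
      have hu' : u ∈ Icc a b := ⟨hu.1, hu.2.trans hx.2⟩
      have h := hgmono hu' hx hu.2
      simp only [hg] at h
      linarith
    have h1 : F x ≤ ∫ u in a..x, (f x - p * x + p * u) :=
      intervalIntegral.integral_mono_on hx.1 (hfi x hx) hint hmono
    have h2 : (∫ u in a..x, (f x - p * x + p * u)) = f x * (x - a) - p * (x - a) ^ 2 / 2 := by
      rw [integral_add (intervalIntegrable_const)
        ((continuous_const_mul p).intervalIntegrable a x),
        akk_integral_const', intervalIntegral.integral_const_mul, akk_integral_id']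
      ring
    rw [h2] at h1
    exact h1
  set H : ℝ → ℝ := fun x => (x - a) ^ (p - 1) * K x - F x ^ (p + 1) with hH
  have hHc : ContinuousOn H (Icc a b) := by
    apply ContinuousOn.sub
    · exact (((continuous_id.sub continuous_const).continuousOn).rpow_const
        (fun x _ => Or.inr (by linarith))).mul hKc
    · exact hFc.rpow_const (fun x _ => Or.inr (by linarith))
  have hHd : ∀ x ∈ Ioo a b, HasDerivAt H
      ((p - 1) * (x - a) ^ (p - 2) * K x + (x - a) ^ (p - 1) * f x ^ (p + 2)
        - (p + 1) * F x ^ p * f x) x := by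
    intro x hx
    have hxa : 0 < x - a := sub_pos.mpr hx.1
    have h1 : HasDerivAt (fun y => (y - a) ^ (p - 1)) ((p - 1) * (x - a) ^ (p - 2)) x := by
      have h0 : HasDerivAt (fun y => y - a) 1 x := (hasDerivAt_id x).sub_const a
      have h := (Real.hasDerivAt_rpow_const (x := x - a) (p := p - 1)
        (Or.inl hxa.ne')).comp x h0
      rw [show p - 1 - 1 = p - 2 by ring, mul_one] at h
      exact h
    have h2 : HasDerivAt (fun y => F y ^ (p + 1)) ((p + 1) * F x ^ p * f x) x := by
      have h := (hFd x hx).rpow_const (p := p + 1) (Or.inr (by linarith))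
      convert h using 1
      rw [show p + 1 - 1 = p by ring]
      try ring
    have h3 := (h1.mul (hKd x hx)).sub h2
    convert h3 using 1
    try ring
    all_goals rfl
  have hHmono : MonotoneOn H (Icc a b) := by
    apply monotoneOn_of_deriv_nonneg (convex_Icc a b) hHc
    · intro x hx
      rw [interior_Icc] at hx
      exact (hHd x hx).differentiableAt.differentiableWithinAt
    · intro x hx
      rw [interior_Icc] at hx
      rw [(hHd x hx).deriv]
      have hxa : 0 < x - a := sub_pos.mpr hx.1
      have hxmem : x ∈ Icc a b := Ioo_subset_Icc_self hx
      have hfx : p * (x - a) ≤ f x := hflb x hxmem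
      have hfx0 : 0 < f x := lt_of_lt_of_le (by positivity) hfx
      have hc : 0 ≤ f x - p * (x - a) / 2 := by nlinarith
      have hcore : (p + 1) * (x - a) * (f x - p * (x - a) / 2) ^ p ≤ f x ^ (p + 1) :=
        akkouchi_core_scalar hp.le hxa hc
      have hFb : F x ≤ (x - a) * (f x - p * (x - a) / 2) := by
        have h := hFub x hxmem
        nlinarith
      have hFp : F x ^ p ≤ (x - a) ^ p * (f x - p * (x - a) / 2) ^ p := by
        rw [← Real.mul_rpow hxa.le hc]
        exact Real.rpow_le_rpow (hF0 x hxmem) hFb hp0.le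
      have e1 : (x - a) ^ p = (x - a) ^ (p - 1) * (x - a) := by
        rw [← Real.rpow_add_one hxa.ne' (p - 1)]
        congr 1
        ring
      have e2 : f x ^ (p + 2) = f x ^ (p + 1) * f x := by
        rw [← Real.rpow_add_one hfx0.ne' (p + 1)]
        congr 1
        ring
      have hterm : (p + 1) * F x ^ p * f x ≤ (x - a) ^ (p - 1) * f x ^ (p + 2) := by
        calc (p + 1) * F x ^ p * f x
            ≤ (p + 1) * ((x - a) ^ p * (f x - p * (x - a) / 2) ^ p) * f x := by
              apply mul_le_mul_of_nonneg_right _ hfx0.le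
              exact mul_le_mul_of_nonneg_left hFp (by linarith)
          _ = ((p + 1) * (x - a) * (f x - p * (x - a) / 2) ^ p) *
                ((x - a) ^ (p - 1) * f x) := by rw [e1]; ring
          _ ≤ f x ^ (p + 1) * ((x - a) ^ (p - 1) * f x) := by
              apply mul_le_mul_of_nonneg_right hcore
              exact mul_nonneg (Real.rpow_nonneg hxa.le _) hfx0.le
          _ = (x - a) ^ (p - 1) * f x ^ (p + 2) := by rw [e2]; ring
      have ht1 : 0 ≤ (p - 1) * (x - a) ^ (p - 2) * K x :=
        mul_nonneg (mul_nonneg (by linarith) (Real.rpow_nonneg hxa.le _)) (hK0 x hxmem)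
      linarith
  have hHa : H a = 0 := by
    have h1 : F a = 0 := intervalIntegral.integral_same
    have h2 : K a = 0 := intervalIntegral.integral_same
    simp [hH, h1, h2, Real.zero_rpow (show p + 1 ≠ 0 by positivity)]
  have hHb := hHmono (left_mem_Icc.mpr hab') hbmem hab'
  rw [hHa] at hHb
  have hba : 0 < (b - a) ^ (p - 1) := Real.rpow_pos_of_pos (by linarith) _
  rw [ge_iff_le, one_div, inv_mul_le_iff₀ hba]
  simp only [hH] at hHb
  linarith
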